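/- Let a₁, …, aₙ be real symmetric 3×3 matrices. There exists a rotation r ∈ SO(3) with r ≠ 1, r² = 1 and r aₖ rᵀ = aₖ for all k (i.e., the n-tuple has at least isotropy class [ℤ₂]) if and only if there exists a nonzero vector ω ∈ ℝ³ such that for all k, l there is a real number λ_{k,l} with ω(aₖ, aₗ) = λ_{k,l} • ω, and for all k, (aₖ ω) × ω = 0. -/
import Mathlib

open Matrix BigOperators

abbrev Mat3 := Matrix (Fin 3) (Fin 3) ℝ

/-- `g ∈ SO(3)`: real orthogonal 3×3 matrix of determinant 1. -/
def IsSO3 (g : Mat3) : Prop := g * gᵀ = 1 ∧ g.det = 1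

/-- The axial vector `ω(a,b)` of the commutator `ab - ba` of two symmetric matrices:
`ω(a,b) = ((ab−ba)₃₂, (ab−ba)₁₃, (ab−ba)₂₁)` (1-based indices). -/
noncomputable def commVec (a b : Mat3) : Fin 3 → ℝ :=
  ![(a * b - b * a) 2 1, (a * b - b * a) 0 2, (a * b - b * a) 1 0]

lemma parallel_of_cross (x y : Fin 3 → ℝ) (hy : y ≠ 0) (h : crossProduct x y = 0) :
    ∃ c : ℝ, x = c • y := by
  have hs : y ⬝ᵥ y ≠ 0 := fun h0 => hy (dotProduct_self_eq_zero.mp h0)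
  refine ⟨(x ⬝ᵥ y) / (y ⬝ᵥ y), ?_⟩
  have h0 := congrFun h 0
  have h1 := congrFun h 1
  have h2 := congrFun h 2
  simp [cross_apply] at h0 h1 h2
  simp only [dotProduct, Fin.sum_univ_three] at hs ⊢
  have e0 : x 0 = (x 0 * y 0 + x 1 * y 1 + x 2 * y 2) / (y 0 * y 0 + y 1 * y 1 + y 2 * y 2) * y 0 := by
    rw [div_mul_eq_mul_div, eq_div_iff hs]; linear_combination y 1 * h2 - y 2 * h1
  have e1 : x 1 = (x 0 * y 0 + x 1 * y 1 + x 2 * y 2) / (y 0 * y 0 + y 1 * y 1 + y 2 * y 2) * y 1 := by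
    rw [div_mul_eq_mul_div, eq_div_iff hs]; linear_combination y 2 * h0 - y 0 * h2
  have e2 : x 2 = (x 0 * y 0 + x 1 * y 1 + x 2 * y 2) / (y 0 * y 0 + y 1 * y 1 + y 2 * y 2) * y 2 := by
    rw [div_mul_eq_mul_div, eq_div_iff hs]; linear_combination y 0 * h1 - y 1 * h0
  funext i
  fin_cases i
  · exact e0
  · exact e1
  · exact e2

lemma transpose_mulVec_cross (M : Mat3) (u v : Fin 3 → ℝ) :
    Mᵀ.mulVec (crossProduct (M.mulVec u) (M.mulVec v)) = M.det • crossProduct u v := by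
  have key : ∀ i : Fin 3,
      Mᵀ.mulVec (crossProduct (M.mulVec u) (M.mulVec v)) i = (M.det • crossProduct u v) i := by
    intro i
    fin_cases i <;>
    [ show Mᵀ.mulVec (crossProduct (M.mulVec u) (M.mulVec v)) 0 = (M.det • crossProduct u v) 0;
      show Mᵀ.mulVec (crossProduct (M.mulVec u) (M.mulVec v)) 1 = (M.det • crossProduct u v) 1;
      show Mᵀ.mulVec (crossProduct (M.mulVec u) (M.mulVec v)) 2 = (M.det • crossProduct u v) 2] <;>
    · simp only [mulVec, dotProduct, Fin.sum_univ_three, cross_apply, transpose_apply,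
        Matrix.det_fin_three, Pi.smul_apply, smul_eq_mul, Matrix.cons_val_zero,
        Matrix.cons_val_one, Matrix.head_cons, Matrix.cons_val_two, Matrix.tail_cons]
      ring
  exact funext key

lemma commVec_cross (a b : Mat3) (ha : aᵀ = a) (hb : bᵀ = b) (ω : Fin 3 → ℝ) :
    crossProduct (commVec a b) ω = (a * b - b * a).mulVec ω := by
  have hA : ∀ p q : Fin 3, a q p = a p q := fun p q => by
    conv_lhs => rw [← ha]
    rfl
  have hB : ∀ p q : Fin 3, b q p = b p q := fun p q => by
    conv_lhs => rw [← hb]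
    rfl
  have key : ∀ i : Fin 3,
      crossProduct (commVec a b) ω i = (a * b - b * a).mulVec ω i := by
    intro i
    fin_cases i <;>
    [ show crossProduct (commVec a b) ω 0 = (a * b - b * a).mulVec ω 0;
      show crossProduct (commVec a b) ω 1 = (a * b - b * a).mulVec ω 1;
      show crossProduct (commVec a b) ω 2 = (a * b - b * a).mulVec ω 2] <;>
    · simp only [cross_apply, commVec, mulVec, dotProduct, Fin.sum_univ_three,
        Matrix.sub_apply, Matrix.mul_apply, Matrix.cons_val_zero, Matrix.cons_val_one,
        Matrix.head_cons, Matrix.cons_val_two, Matrix.tail_cons]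
      simp only [hA 0 1, hA 0 2, hA 1 2, hB 0 1, hB 0 2, hB 1 2]
      ring
  exact funext key

lemma det_cols_cross (u v : Fin 3 → ℝ) :
    (Matrix.of ![u, v, crossProduct u v]).det = crossProduct u v ⬝ᵥ crossProduct u v := by
  simp only [Matrix.det_fin_three, Matrix.of_apply, cross_apply, dotProduct,
    Fin.sum_univ_three, Matrix.cons_val_zero, Matrix.cons_val_one, Matrix.head_cons,
    Matrix.cons_val_two, Matrix.tail_cons]
  ring

/-- If `r` fixes `u`, `v` and `u ×₃ v`, and `u ×₃ v ≠ 0`, then `r = 1`. -/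
lemma eq_one_of_fixes (r : Mat3) (u v : Fin 3 → ℝ)
    (hu : r.mulVec u = u) (hv : r.mulVec v = v)
    (hw : r.mulVec (crossProduct u v) = crossProduct u v)
    (hne : crossProduct u v ≠ 0) : r = 1 := by
  set B : Mat3 := (Matrix.of ![u, v, crossProduct u v])ᵀ with hB
  have hcol : ∀ j : Fin 3,
      r.mulVec (![u, v, crossProduct u v] j) = ![u, v, crossProduct u v] j := by
    intro j
    fin_cases j
    · exact hu
    · exact hv
    · exact hw
  have hrB : r * B = B := by
    ext i j
    have h := congrFun (hcol j) i
    simp only [mulVec, dotProduct] at h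
    simp only [hB, Matrix.mul_apply, Matrix.transpose_apply, Matrix.of_apply]
    exact h
  have hdet : IsUnit B.det := by
    rw [hB, Matrix.det_transpose, det_cols_cross]
    exact (isUnit_iff_ne_zero).mpr (fun h0 => hne (dotProduct_self_eq_zero.mp h0))
  calc r = r * (B * B⁻¹) := by rw [Matrix.mul_nonsing_inv B hdet, mul_one]
    _ = (r * B) * B⁻¹ := by rw [mul_assoc]
    _ = B * B⁻¹ := by rw [hrB]
    _ = 1 := Matrix.mul_nonsing_inv B hdet

theorem isotropy_Z2_iff {n : ℕ} (a : Fin n → Mat3) (hsym : ∀ k, (a k)ᵀ = a k) :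
    (∃ r : Mat3, IsSO3 r ∧ r ≠ 1 ∧ r * r = 1 ∧ ∀ k, r * a k * rᵀ = a k) ↔
    (∃ ω : Fin 3 → ℝ, ω ≠ 0 ∧
      (∀ k l, ∃ lam : ℝ, commVec (a k) (a l) = lam • ω) ∧
      (∀ k, crossProduct ((a k).mulVec ω) ω = 0)) := by
  constructor
  · rintro ⟨r, ⟨horth, hdet⟩, hne, hr2, hfix⟩
    -- r is symmetric
    have hrT : rᵀ = r := by
      calc rᵀ = (r * r) * rᵀ := by rw [hr2, one_mul]
        _ = r * (r * rᵀ) := by rw [mul_assoc]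
        _ = r := by rw [horth, mul_one]
    -- r ≠ -1, so r + 1 ≠ 0
    have hr1 : r + 1 ≠ 0 := by
      intro h
      have hrneg : r = -1 := by
        have := eq_neg_of_add_eq_zero_left h
        simpa using this
      rw [hrneg] at hdet
      rw [show (-1 : Mat3) = -(1 : Mat3) from rfl, Matrix.det_neg] at hdet
      simp [Fintype.card_fin] at hdet
      norm_num at hdet
    obtain ⟨i, j, hij⟩ : ∃ i j, (r + 1) i j ≠ 0 := by
      by_contra hcon
      push_neg at hcon
      exact hr1 (by ext i j; simpa using hcon i j)
    set ω : Fin 3 → ℝ := (r + 1).mulVec (Pi.single j 1) with hωdef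
    have hω : ω ≠ 0 := by
      intro h0
      apply hij
      have := congrFun h0 i
      simpa [hωdef] using this
    have hfixω : r.mulVec ω = ω := by
      rw [hωdef, Matrix.mulVec_mulVec, mul_add, hr2, mul_one, add_comm]
    have hcomm : ∀ k, r * a k = a k * r := by
      intro k
      have h1 : r * a k * r = a k := by rw [← hrT] at hr2 ⊢; rw [hrT]; simpa [hrT] using hfix k
      calc r * a k = r * a k * (r * r) := by rw [hr2, mul_one]
        _ = (r * a k * r) * r := by noncomm_ring
        _ = a k * r := by rw [h1]
    have hfixa : ∀ k, r.mulVec ((a k).mulVec ω) = (a k).mulVec ω := by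
      intro k
      rw [Matrix.mulVec_mulVec, hcomm k, ← Matrix.mulVec_mulVec, hfixω]
    have hcross : ∀ k, crossProduct ((a k).mulVec ω) ω = 0 := by
      intro k
      by_contra hw
      apply hne
      apply eq_one_of_fixes r ((a k).mulVec ω) ω (hfixa k) hfixω ?_ hw
      -- r fixes the cross product
      have key := transpose_mulVec_cross r ((a k).mulVec ω) ω
      rw [hfixa k, hfixω, hdet, one_smul, hrT] at key
      exact key
    refine ⟨ω, hω, ?_, hcross⟩
    intro k l
    -- eigenvector equations
    obtain ⟨lk, hk⟩ := parallel_of_cross _ ω hω (hcross k)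
    obtain ⟨ll, hl⟩ := parallel_of_cross _ ω hω (hcross l)
    apply parallel_of_cross _ ω hω
    rw [commVec_cross (a k) (a l) (hsym k) (hsym l) ω]
    rw [Matrix.sub_mulVec, ← Matrix.mulVec_mulVec, ← Matrix.mulVec_mulVec, hk, hl,
      Matrix.mulVec_smul, Matrix.mulVec_smul, hk, hl, smul_smul, smul_smul,
      mul_comm, sub_self]
  · rintro ⟨ω, hω, hcomm, hcross⟩
    have hs : ω ⬝ᵥ ω ≠ 0 := fun h0 => hω (dotProduct_self_eq_zero.mp h0)
    set s : ℝ := ω ⬝ᵥ ω with hsdef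
    set c : ℝ := 2 / s with hcdef
    have hcs : c * s = 2 := by rw [hcdef]; field_simp
    have hcs' : c * (ω 0 * ω 0 + ω 1 * ω 1 + ω 2 * ω 2) = 2 := by
      rw [show ω 0 * ω 0 + ω 1 * ω 1 + ω 2 * ω 2 = s by
        rw [hsdef]; simp [dotProduct, Fin.sum_univ_three]]
      exact hcs
    set P : Mat3 := vecMulVec ω ω with hPdef
    set r : Mat3 := c • P - 1 with hrdef
    have hPT : Pᵀ = P := by
      ext p q; simp [hPdef, vecMulVec_apply, mul_comm]
    have hrT : rᵀ = r := by
      rw [hrdef, Matrix.transpose_sub, Matrix.transpose_smul, hPT, Matrix.transpose_one]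
    have hP2 : P * P = s • P := by
      ext p q
      simp only [hPdef, Matrix.mul_apply, vecMulVec_apply, Matrix.smul_apply,
        Fin.sum_univ_three, smul_eq_mul, hsdef, dotProduct]
      ring
    have hr2 : r * r = 1 := by
      rw [hrdef]
      rw [sub_mul, mul_sub, mul_sub, one_mul, mul_one, smul_mul_assoc, Matrix.mul_smul,
        hP2, smul_smul, smul_smul]
      have hc2 : c * c * s = 2 * c := by
        rw [show c * c * s = c * (c * s) by ring, hcs]; ring
      rw [hc2, one_mul]
      rw [show (2 * c) • P = c • P + c • P by rw [two_mul, add_smul]]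
      abel
    -- eigen equations
    have heig : ∀ k, ∃ lam : ℝ, (a k).mulVec ω = lam • ω := fun k =>
      parallel_of_cross _ ω hω (hcross k)
    refine ⟨r, ⟨?_, ?_⟩, ?_, hr2, ?_⟩
    · rw [hrT]; exact hr2
    · -- determinant
      have e : ∀ p q : Fin 3, r p q = c * ω p * ω q - (1 : Mat3) p q := by
        intro p q
        simp [hrdef, hPdef, Matrix.sub_apply, Matrix.smul_apply, vecMulVec_apply, mul_assoc]
      rw [Matrix.det_fin_three]
      simp only [e, Matrix.one_apply_eq, Matrix.one_apply_ne (by decide : (0 : Fin 3) ≠ 1),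
        Matrix.one_apply_ne (by decide : (0 : Fin 3) ≠ 2),
        Matrix.one_apply_ne (by decide : (1 : Fin 3) ≠ 0),
        Matrix.one_apply_ne (by decide : (1 : Fin 3) ≠ 2),
        Matrix.one_apply_ne (by decide : (2 : Fin 3) ≠ 0),
        Matrix.one_apply_ne (by decide : (2 : Fin 3) ≠ 1)]
      linear_combination hcs'
    · -- r ≠ 1
      intro h
      have htr := congrArg Matrix.trace h
      rw [Matrix.trace_one] at htr
      rw [Matrix.trace_fin_three] at htr
      have e : ∀ p : Fin 3, r p p = c * ω p * ω p - 1 := by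
        intro p
        simp [hrdef, hPdef, Matrix.sub_apply, Matrix.smul_apply, vecMulVec_apply, mul_assoc]
      rw [e 0, e 1, e 2] at htr
      simp only [Fintype.card_fin, Nat.cast_ofNat] at htr
      have : (6 : ℝ) = 2 := by linear_combination hcs' - htr
      norm_num at this
    · -- conjugation fixes each a k
      intro k
      obtain ⟨lam, hk⟩ := heig k
      have hsymE : ∀ p q : Fin 3, (a k) q p = (a k) p q := fun p q => by
        conv_lhs => rw [← hsym k]
        rfl
      have haP : a k * P = lam • P := by
        ext p q
        have h := congrFun hk p
        simp only [mulVec, dotProduct, Fin.sum_univ_three, Pi.smul_apply, smul_eq_mul] at h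
        simp only [hPdef, Matrix.mul_apply, vecMulVec_apply, Matrix.smul_apply,
          Fin.sum_univ_three, smul_eq_mul]
        linear_combination ω q * h
      have hPa : P * a k = lam • P := by
        ext p q
        have h := congrFun hk q
        simp only [mulVec, dotProduct, Fin.sum_univ_three, Pi.smul_apply, smul_eq_mul] at h
        simp only [hPdef, Matrix.mul_apply, vecMulVec_apply, Matrix.smul_apply,
          Fin.sum_univ_three, smul_eq_mul]
        simp only [hsymE q 0, hsymE q 1, hsymE q 2]
        linear_combination ω p * h
      have hcom : r * a k = a k * r := by
        rw [hrdef, sub_mul, mul_sub, one_mul, mul_one, smul_mul_assoc, Matrix.mul_smul,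
          haP, hPa]
      rw [hrT]
      calc r * a k * r = a k * r * r := by rw [hcom]
        _ = a k * (r * r) := by rw [mul_assoc]
        _ = a k := by rw [hr2, mul_one]
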